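/- arXiv:2205.10198 — 3 statements merged into one kernel-verified Lean document; each statement's English description precedes it below -/
import Mathlib

section
/- Let x₁,…,x_n be i.i.d. N(0, (1/n)·I_p) with p/n → κ ∈ (0, 1/2), and z₁,…,z_n i.i.d. N(0, 1/n) independent of the xᵢ. Then (Σᵢ (1/√n)xᵢ)ᵀ(Σᵢxᵢxᵢᵀ)^{-1}(Σᵢzᵢxᵢ) converges in probability to 0. -/
open MeasureTheory ProbabilityTheory Matrix Filter Real

lemma gauss_integrable_pow (v : NNReal) (k : ℕ) : Integrable (fun x : ℝ => x ^ k) (gaussianReal 0 v) := by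
  by_cases hv : v = 0
  · subst hv; rw [gaussianReal_zero_var]; exact (integrable_const _).congr (ae_eq_dirac _).symm
  rw [gaussianReal_of_var_ne_zero _ hv]
  rw [integrable_withDensity_iff (measurable_gaussianPDF _ _) (ae_of_all _ fun x => ENNReal.ofReal_lt_top)]
  simp only [gaussianPDF, ENNReal.toReal_ofReal (gaussianPDFReal_nonneg _ _ _)]
  unfold gaussianPDFReal
  have hb : 0 < (2 * (v:ℝ))⁻¹ := by positivity
  have := (integrable_rpow_mul_exp_neg_mul_sq hb (s := k) (by exact lt_of_lt_of_le (by norm_num) (Nat.cast_nonneg k))).const_mul ((Real.sqrt (2 * Real.pi * v))⁻¹)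
  apply this.congr
  filter_upwards with x
  rw [Real.rpow_natCast]
  ring_nf

lemma gauss_first_moment (v : NNReal) : ∫ x, x ∂(gaussianReal 0 v) = 0 := by
  have hmap := gaussianReal_map_const_mul (μ := 0) (v := v) (-1)
  have h1 : (NNReal.mk ((-1:ℝ)^2) (sq_nonneg _)) = 1 := by
    ext; change (-1:ℝ)^2 = 1; norm_num
  rw [h1, one_mul, mul_zero] at hmap
  have hint : ∫ x, x ∂((gaussianReal 0 v).map ((-1 : ℝ) * ·)) = ∫ x, (-1) * x ∂(gaussianReal 0 v) := by
    rw [integral_map (measurable_id'.const_mul _).aemeasurable]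
    exact aestronglyMeasurable_id
  rw [hmap] at hint
  have : ∫ x, (-1:ℝ) * x ∂(gaussianReal 0 v) = - ∫ x, x ∂(gaussianReal 0 v) := by
    simp_rw [neg_one_mul]; exact integral_neg _
  rw [this] at hint
  linarith

lemma gauss_second_moment (n : ℕ) :
    ∫ x, x ^ 2 ∂(gaussianReal 0 (n : NNReal)⁻¹) = (∫ x, x ^ 2 ∂(gaussianReal 0 1)) / n := by
  rcases Nat.eq_zero_or_pos n with hn | hn
  · subst hn
    simp [gaussianReal_zero_var, integral_dirac]
  have hn' : (0:ℝ) < n := by exact_mod_cast hn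
  set c : ℝ := Real.sqrt (n : ℝ)⁻¹ with hc
  have hc2 : c ^ 2 = (n:ℝ)⁻¹ := Real.sq_sqrt (by positivity)
  have hmap := gaussianReal_map_const_mul (μ := 0) (v := 1) c
  have h1 : (NNReal.mk (c^2) (sq_nonneg _)) = (n : NNReal)⁻¹ := by
    ext
    change c^2 = ((n:NNReal)⁻¹ : ℝ)
    rw [hc2]
    simp
  rw [h1, mul_one, mul_zero] at hmap
  have hint : ∫ x, x ^ 2 ∂((gaussianReal 0 1).map (c * ·)) = ∫ x, (c * x) ^ 2 ∂(gaussianReal 0 1) := by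
    rw [integral_map (measurable_id'.const_mul _).aemeasurable]
    exact (measurable_id.pow_const 2).aestronglyMeasurable
  rw [hmap] at hint
  rw [hint]
  simp_rw [mul_pow]
  rw [integral_const_mul, hc2, div_eq_inv_mul]

lemma pi_integral_prod {ι : Type*} [Fintype ι] (μ : Measure ℝ) [SigmaFinite μ] (f : ι → ℝ → ℝ) :
    ∫ x : ι → ℝ, ∏ i, f i (x i) ∂(Measure.pi fun _ => μ) = ∏ i, ∫ x, f i x ∂μ := by
  letI : MeasureSpace ℝ := ⟨μ⟩
  haveI : SigmaFinite (volume : Measure ℝ) := ‹SigmaFinite μ›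
  exact integral_fintype_prod_eq_prod f

lemma pi_integrable_prod {ι : Type*} [Fintype ι] (μ : Measure ℝ) [SigmaFinite μ] (f : ι → ℝ → ℝ)
    (hf : ∀ i, Integrable (f i) μ) :
    Integrable (fun x : ι → ℝ => ∏ i, f i (x i)) (Measure.pi fun _ => μ) := by
  letI : MeasureSpace ℝ := ⟨μ⟩
  haveI : SigmaFinite (volume : Measure ℝ) := ‹SigmaFinite μ›
  exact Integrable.fintype_prod hf

lemma moment_pair (v : NNReal) {ι : Type*} [Fintype ι] [DecidableEq ι] (i j : ι) :
    Integrable (fun z : ι → ℝ => z i * z j) (Measure.pi fun _ => gaussianReal 0 v) ∧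
    ∫ z : ι → ℝ, z i * z j ∂(Measure.pi fun _ => gaussianReal 0 v)
      = if i = j then ∫ x, x ^ 2 ∂(gaussianReal 0 v) else 0 := by
  set g : ι → ℝ → ℝ := fun k x => x ^ ((if k = i then 1 else 0) + (if k = j then 1 else 0) : ℕ)
    with hg
  have hprod : ∀ z : ι → ℝ, z i * z j = ∏ k, g k (z k) := by
    intro z
    simp only [hg, pow_add]
    rw [Finset.prod_mul_distrib]
    simp [pow_ite, Finset.prod_ite_eq' Finset.univ]
  have hint : ∀ k, Integrable (g k) (gaussianReal 0 v) := fun k => gauss_integrable_pow v _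
  constructor
  · exact (pi_integrable_prod _ g hint).congr (ae_of_all _ fun z => (hprod z).symm)
  · rw [integral_congr_ae (ae_of_all _ hprod), pi_integral_prod _ g]
    rcases eq_or_ne i j with rfl | hij
    · rw [if_pos rfl]
      have : ∀ k, ∫ x, g k x ∂(gaussianReal 0 v)
          = if k = i then ∫ x, x ^ 2 ∂(gaussianReal 0 v) else 1 := by
        intro k
        rcases eq_or_ne k i with rfl | hk
        · simp [hg]
        · simp [hg, hk]
      rw [Finset.prod_congr rfl fun k _ => this k]
      simp
    · rw [if_neg hij]
      apply Finset.prod_eq_zero (Finset.mem_univ i)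
      simp only [hg, if_pos rfl, if_neg hij]
      simpa using gauss_first_moment v

lemma sum_sq_moment (v : NNReal) {ι : Type*} [Fintype ι] [DecidableEq ι] (c : ι → ℝ) :
    Integrable (fun z : ι → ℝ => (∑ i, c i * z i) ^ 2) (Measure.pi fun _ => gaussianReal 0 v) ∧
    ∫ z : ι → ℝ, (∑ i, c i * z i) ^ 2 ∂(Measure.pi fun _ => gaussianReal 0 v)
      = (∑ i, c i ^ 2) * ∫ x, x ^ 2 ∂(gaussianReal 0 v) := by
  have hexp : ∀ z : ι → ℝ, (∑ i, c i * z i) ^ 2 = ∑ i, ∑ j, (c i * c j) * (z i * z j) := by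
    intro z
    rw [sq, Finset.sum_mul_sum]
    congr 1; ext i; congr 1; ext j; ring
  have hint : ∀ (i j : ι), Integrable (fun z : ι → ℝ => (c i * c j) * (z i * z j))
      (Measure.pi fun _ => gaussianReal 0 v) :=
    fun i j => ((moment_pair v i j).1).const_mul _
  constructor
  · exact (integrable_finset_sum _ fun i _ => integrable_finset_sum _ fun j _ => hint i j).congr
      (ae_of_all _ fun z => (hexp z).symm)
  · rw [integral_congr_ae (ae_of_all _ hexp),
      integral_finset_sum _ fun i _ => integrable_finset_sum _ fun j _ => hint i j]
    have : ∀ i, ∫ z : ι → ℝ, ∑ j, (c i * c j) * (z i * z j) ∂(Measure.pi fun _ => gaussianReal 0 v)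
        = c i ^ 2 * ∫ x, x ^ 2 ∂(gaussianReal 0 v) := by
      intro i
      rw [integral_finset_sum _ fun j _ => hint i j]
      have : ∀ j, ∫ z : ι → ℝ, (c i * c j) * (z i * z j) ∂(Measure.pi fun _ => gaussianReal 0 v)
          = (c i * c j) * if i = j then ∫ x, x ^ 2 ∂(gaussianReal 0 v) else 0 := by
        intro j
        rw [MeasureTheory.integral_const_mul, (moment_pair v i j).2]
      rw [Finset.sum_congr rfl fun j _ => this j]
      simp [mul_ite, Finset.sum_ite_eq, sq]
    rw [Finset.sum_congr rfl fun i _ => this i, ← Finset.sum_mul]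

lemma coeff_sq_sum_le (n : ℕ) (hn : 0 < n) {q : ℕ} (X : Fin n → Fin q → ℝ) :
    ∑ i, ((∑ j, (1 / Real.sqrt n) • X j) ⬝ᵥ ((∑ j, vecMulVec (X j) (X j))⁻¹ *ᵥ X i)) ^ 2 ≤ 1 := by
  set A : Matrix (Fin q) (Fin q) ℝ := ∑ j, vecMulVec (X j) (X j) with hA
  set v : Fin q → ℝ := ∑ j, (1 / Real.sqrt n) • X j with hv
  by_cases hU : IsUnit A.det
  swap
  · rw [Matrix.nonsing_inv_apply_not_isUnit _ hU]
    simp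
  set w : Fin q → ℝ := A⁻¹ *ᵥ v with hw
  have hAsym : Aᵀ = A := by
    ext a b
    simp [hA, Matrix.transpose_apply, Matrix.sum_apply, Matrix.vecMulVec_apply, mul_comm]
  have hc : ∀ u : Fin q → ℝ, v ⬝ᵥ (A⁻¹ *ᵥ u) = w ⬝ᵥ u := by
    intro u
    rw [Matrix.dotProduct_mulVec, hw]
    congr 1
    rw [← Matrix.mulVec_transpose, Matrix.transpose_nonsing_inv, hAsym]
  have hAw : A *ᵥ w = v := by
    rw [hw, Matrix.mulVec_mulVec, Matrix.mul_nonsing_inv _ hU, Matrix.one_mulVec]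
  set t : ℝ := w ⬝ᵥ v with htdef
  have hquad : ∑ i, (w ⬝ᵥ X i) ^ 2 = t := by
    have h1 : t = w ⬝ᵥ (A *ᵥ w) := by rw [hAw]
    rw [h1, hA]
    simp only [Matrix.mulVec, dotProduct, Matrix.sum_apply, Matrix.vecMulVec_apply,
      Finset.sum_mul, Finset.mul_sum, sq]
    rw [Finset.sum_comm]
    refine Finset.sum_congr rfl fun j _ => ?_
    rw [Finset.sum_comm]
    refine Finset.sum_congr rfl fun a _ => ?_
    refine Finset.sum_congr rfl fun b _ => ?_
    ring
  have hsum : ∑ i, (w ⬝ᵥ X i) = Real.sqrt n * t := by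
    have h2 : t = ∑ j, (1 / Real.sqrt n) * (w ⬝ᵥ X j) := by
      rw [htdef, hv]
      simp only [dotProduct, Finset.sum_apply, Pi.smul_apply, smul_eq_mul,
        Finset.mul_sum]
      rw [Finset.sum_comm]
      refine Finset.sum_congr rfl fun j _ => ?_
      refine Finset.sum_congr rfl fun a _ => ?_
      ring
    have hs : Real.sqrt n ≠ 0 := by
      simp only [ne_eq, Real.sqrt_eq_zero', not_le, Nat.cast_nonneg]
      positivity
    rw [h2, Finset.mul_sum]
    refine Finset.sum_congr rfl fun j _ => ?_
    field_simp
  have ht0 : 0 ≤ t := by rw [← hquad]; positivity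
  have hCS : (∑ i, (w ⬝ᵥ X i)) ^ 2 ≤ (n : ℝ) * ∑ i, (w ⬝ᵥ X i) ^ 2 := by
    simpa using sq_sum_le_card_mul_sum_sq (s := (Finset.univ : Finset (Fin n)))
      (f := fun i => w ⬝ᵥ X i)
  rw [hsum, hquad, mul_pow, Real.sq_sqrt (by positivity : (0:ℝ) ≤ (n:ℝ))] at hCS
  have hn0 : (0:ℝ) < n := by exact_mod_cast hn
  have htt : t ^ 2 ≤ t := by
    have := (mul_le_mul_iff_right₀ hn0).mp hCS
    linarith
  have ht1 : t ≤ 1 := by nlinarith [htt, ht0]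
  calc ∑ i, (v ⬝ᵥ (A⁻¹ *ᵥ X i)) ^ 2 = ∑ i, (w ⬝ᵥ X i) ^ 2 :=
        Finset.sum_congr rfl fun i _ => by rw [hc]
    _ = t := hquad
    _ ≤ 1 := ht1

lemma measurable_matrix_det {α : Type*} [MeasurableSpace α] {q : ℕ}
    {f : α → Matrix (Fin q) (Fin q) ℝ} (hf : ∀ a b, Measurable fun x => f x a b) :
    Measurable fun x => (f x).det := by
  simp_rw [Matrix.det_apply, Units.smul_def, zsmul_eq_mul]
  exact Finset.measurable_sum _ fun σ _ =>
    measurable_const.mul (Finset.measurable_prod _ fun i _ => hf _ _)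

lemma measurable_matrix_adjugate {α : Type*} [MeasurableSpace α] {q : ℕ}
    {f : α → Matrix (Fin q) (Fin q) ℝ} (hf : ∀ a b, Measurable fun x => f x a b) (i j : Fin q) :
    Measurable fun x => (f x).adjugate i j := by
  simp_rw [Matrix.adjugate_apply]
  apply measurable_matrix_det
  intro a b
  simp_rw [Matrix.updateRow_apply]
  split_ifs
  · exact measurable_const
  · exact hf a b

lemma measurable_S (n q : ℕ) :
    Measurable (fun ω : (Fin n → ℝ) × (Fin n → Fin q → ℝ) =>
      (∑ i, (1 / Real.sqrt n) • ω.2 i) ⬝ᵥ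
        ((∑ i, vecMulVec (ω.2 i) (ω.2 i))⁻¹ *ᵥ (∑ i, ω.1 i • ω.2 i))) := by
  have hX : ∀ (i : Fin n) (a : Fin q), Measurable fun ω : (Fin n → ℝ) × (Fin n → Fin q → ℝ) => ω.2 i a :=
    fun i a => (measurable_pi_apply a).comp ((measurable_pi_apply i).comp measurable_snd)
  have hz : ∀ i : Fin n, Measurable fun ω : (Fin n → ℝ) × (Fin n → Fin q → ℝ) => ω.1 i :=
    fun i => (measurable_pi_apply i).comp measurable_fst
  have hA : ∀ a b, Measurable fun ω : (Fin n → ℝ) × (Fin n → Fin q → ℝ) =>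
      (∑ i, vecMulVec (ω.2 i) (ω.2 i)) a b := by
    intro a b
    simp_rw [Matrix.sum_apply, Matrix.vecMulVec_apply]
    exact Finset.measurable_sum _ fun i _ => (hX i a).mul (hX i b)
  have hinv : ∀ a b, Measurable fun ω : (Fin n → ℝ) × (Fin n → Fin q → ℝ) =>
      (∑ i, vecMulVec (ω.2 i) (ω.2 i))⁻¹ a b := by
    intro a b
    simp_rw [Matrix.inv_def, Matrix.smul_apply, Ring.inverse_eq_inv', smul_eq_mul]
    exact ((measurable_matrix_det hA).inv).mul (measurable_matrix_adjugate hA a b)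
  have hv : ∀ a, Measurable fun ω : (Fin n → ℝ) × (Fin n → Fin q → ℝ) =>
      (∑ i, (1 / Real.sqrt n) • ω.2 i) a := by
    intro a
    simp_rw [Finset.sum_apply, Pi.smul_apply, smul_eq_mul]
    exact Finset.measurable_sum _ fun i _ => measurable_const.mul (hX i a)
  have hw : ∀ a, Measurable fun ω : (Fin n → ℝ) × (Fin n → Fin q → ℝ) =>
      (∑ i, ω.1 i • ω.2 i) a := by
    intro a
    simp_rw [Finset.sum_apply, Pi.smul_apply, smul_eq_mul]
    exact Finset.measurable_sum _ fun i _ => (hz i).mul (hX i a)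
  simp_rw [dotProduct, Matrix.mulVec, dotProduct]
  exact Finset.measurable_sum _ fun a _ => (hv a).mul
    (Finset.measurable_sum _ fun b _ => (hinv a b).mul (hw b))

lemma dot_mulVec_sum {q n : ℕ} (v : Fin q → ℝ) (B : Matrix (Fin q) (Fin q) ℝ)
    (z : Fin n → ℝ) (X : Fin n → Fin q → ℝ) :
    v ⬝ᵥ (B *ᵥ ∑ i, z i • X i) = ∑ i, (v ⬝ᵥ (B *ᵥ X i)) * z i := by
  have h1 : B *ᵥ (∑ i, z i • X i) = ∑ i, z i • (B *ᵥ X i) := by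
    rw [← Matrix.mulVecLin_apply, map_sum]
    exact Finset.sum_congr rfl fun i _ => by
      rw [LinearMap.map_smul, Matrix.mulVecLin_apply]
  rw [h1]
  simp only [dotProduct, Finset.sum_apply, Pi.smul_apply, smul_eq_mul, Finset.mul_sum]
  rw [Finset.sum_comm]
  exact Finset.sum_congr rfl fun i _ => by
    rw [Finset.sum_mul]
    exact Finset.sum_congr rfl fun a _ => by ring

lemma S_eq_sum (n q : ℕ) (z : Fin n → ℝ) (X : Fin n → Fin q → ℝ) :
    (∑ i, (1 / Real.sqrt n) • X i) ⬝ᵥ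
        ((∑ i, vecMulVec (X i) (X i))⁻¹ *ᵥ (∑ i, z i • X i))
      = ∑ i, ((∑ j, (1 / Real.sqrt n) • X j) ⬝ᵥ
          ((∑ j, vecMulVec (X j) (X j))⁻¹ *ᵥ X i)) * z i :=
  dot_mulVec_sum _ _ _ _

lemma per_n_bound (n q : ℕ) (hn : 0 < n) (ε : ℝ) (hε : 0 < ε) :
    ((Measure.pi fun _ : Fin n => gaussianReal 0 (n : NNReal)⁻¹).prod
      (Measure.pi fun _ : Fin n => Measure.pi fun _ : Fin q => gaussianReal 0 (n : NNReal)⁻¹))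
      {ω : (Fin n → ℝ) × (Fin n → Fin q → ℝ) |
        ε < |(∑ i, (1 / Real.sqrt n) • ω.2 i) ⬝ᵥ
          ((∑ i, vecMulVec (ω.2 i) (ω.2 i))⁻¹ *ᵥ (∑ i, ω.1 i • ω.2 i))|}
      ≤ ENNReal.ofReal ((∫ x, x ^ 2 ∂(gaussianReal 0 1)) / n) / ENNReal.ofReal (ε ^ 2) := by
  set vv : NNReal := (n : NNReal)⁻¹ with hvv
  set μ1 : Measure (Fin n → ℝ) := Measure.pi fun _ => gaussianReal 0 vv with hμ1
  set μ2 : Measure (Fin n → Fin q → ℝ) :=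
    Measure.pi fun _ => Measure.pi fun _ => gaussianReal 0 vv with hμ2
  set M : ℝ := ∫ x, x ^ 2 ∂(gaussianReal 0 1) with hM
  have hM0 : 0 ≤ M := integral_nonneg fun x => sq_nonneg x
  set S : (Fin n → ℝ) × (Fin n → Fin q → ℝ) → ℝ := fun ω =>
    (∑ i, (1 / Real.sqrt n) • ω.2 i) ⬝ᵥ
      ((∑ i, vecMulVec (ω.2 i) (ω.2 i))⁻¹ *ᵥ (∑ i, ω.1 i • ω.2 i)) with hS
  have hSm : Measurable S := measurable_S n q
  have hsub : {ω : (Fin n → ℝ) × (Fin n → Fin q → ℝ) | ε < |S ω|}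
      ⊆ {ω | ENNReal.ofReal (ε ^ 2) ≤ ENNReal.ofReal (S ω ^ 2)} := by
    intro ω hω
    simp only [Set.mem_setOf_eq] at hω ⊢
    apply ENNReal.ofReal_le_ofReal
    have h1 : ε ≤ |S ω| := le_of_lt hω
    calc ε ^ 2 ≤ |S ω| ^ 2 := by
          apply pow_le_pow_left₀ (le_of_lt hε) h1
      _ = S ω ^ 2 := sq_abs _
  have hmark := mul_meas_ge_le_lintegral₀
    (μ := μ1.prod μ2) (f := fun ω => ENNReal.ofReal (S ω ^ 2))
    ((hSm.pow_const 2).ennreal_ofReal.aemeasurable) (ENNReal.ofReal (ε ^ 2))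
  have hbound : ∫⁻ ω, ENNReal.ofReal (S ω ^ 2) ∂(μ1.prod μ2) ≤ ENNReal.ofReal (M / n) := by
    rw [lintegral_prod_symm _ ((hSm.pow_const 2).ennreal_ofReal.aemeasurable)]
    have hinner : ∀ X : Fin n → Fin q → ℝ,
        ∫⁻ z, ENNReal.ofReal (S (z, X) ^ 2) ∂μ1 ≤ ENNReal.ofReal (M / n) := by
      intro X
      set c : Fin n → ℝ := fun i => (∑ j, (1 / Real.sqrt n) • X j) ⬝ᵥ
        ((∑ j, vecMulVec (X j) (X j))⁻¹ *ᵥ X i) with hcdef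
      have hSz : ∀ z : Fin n → ℝ, S (z, X) = ∑ i, c i * z i := fun z => S_eq_sum n q z X
      have hint := (sum_sq_moment vv c).1
      have hval := (sum_sq_moment vv c).2
      have heq : ∫⁻ z, ENNReal.ofReal (S (z, X) ^ 2) ∂μ1
          = ENNReal.ofReal (∫ z, (∑ i, c i * z i) ^ 2 ∂μ1) := by
        have hfe : (fun z => ENNReal.ofReal (S (z, X) ^ 2))
            = fun z => ENNReal.ofReal ((∑ i, c i * z i) ^ 2) :=
          funext fun z => by rw [hSz z]
        rw [hfe, ← ofReal_integral_eq_lintegral_ofReal hint (ae_of_all _ fun z => sq_nonneg _)]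
      rw [heq, hval]
      apply ENNReal.ofReal_le_ofReal
      have hc1 : ∑ i, c i ^ 2 ≤ 1 := coeff_sq_sum_le n hn X
      have hVn : ∫ x, x ^ 2 ∂(gaussianReal 0 vv) = M / n := gauss_second_moment n
      rw [hVn]
      have hMn : 0 ≤ M / n := by positivity
      nlinarith [Finset.sum_nonneg (fun i (_ : i ∈ Finset.univ) => sq_nonneg (c i))]
    calc ∫⁻ X, ∫⁻ z, ENNReal.ofReal (S (z, X) ^ 2) ∂μ1 ∂μ2
        ≤ ∫⁻ _, ENNReal.ofReal (M / n) ∂μ2 := lintegral_mono fun X => hinner X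
      _ = ENNReal.ofReal (M / n) := by
          rw [lintegral_const]
          simp [hμ2]
  have hε2 : ENNReal.ofReal (ε ^ 2) ≠ 0 := by
    simp only [ne_eq, ENNReal.ofReal_eq_zero, not_le]
    positivity
  rw [ENNReal.le_div_iff_mul_le (Or.inl hε2) (Or.inl ENNReal.ofReal_ne_top)]
  calc (μ1.prod μ2) {ω | ε < |S ω|} * ENNReal.ofReal (ε ^ 2)
      ≤ (μ1.prod μ2) {ω | ENNReal.ofReal (ε ^ 2) ≤ ENNReal.ofReal (S ω ^ 2)}
          * ENNReal.ofReal (ε ^ 2) := by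
        exact mul_le_mul_left (measure_mono hsub) _
    _ = ENNReal.ofReal (ε ^ 2)
          * (μ1.prod μ2) {ω | ENNReal.ofReal (ε ^ 2) ≤ ENNReal.ofReal (S ω ^ 2)} := mul_comm _ _
    _ ≤ ∫⁻ ω, ENNReal.ofReal (S ω ^ 2) ∂(μ1.prod μ2) := hmark
    _ ≤ ENNReal.ofReal (M / n) := hbound

/-- For `x₁, …, x_n` i.i.d. `N(0, (1/n) I_p)` with `p/n → κ ∈ (0, 1/2)` and independent
`z₁, …, z_n` i.i.d. `N(0, 1/n)`,
`(Σᵢ (1/√n) xᵢ)ᵀ (Σᵢ xᵢxᵢᵀ)⁻¹ (Σᵢ zᵢxᵢ) → 0` in probability. -/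
theorem gram_cross_term_limit (p : ℕ → ℕ) (κ : ℝ) (hκ : 0 < κ) (hκ' : κ < 1 / 2)
    (hp : Tendsto (fun n => (p n : ℝ) / n) atTop (nhds κ)) :
    ∀ ε > (0 : ℝ),
      Tendsto (fun n =>
          ((Measure.pi fun _ : Fin n => gaussianReal 0 (n : NNReal)⁻¹).prod
            (Measure.pi fun _ : Fin n =>
              (Measure.pi fun _ : Fin (p n) => gaussianReal 0 (n : NNReal)⁻¹)))
            {ω : (Fin n → ℝ) × (Fin n → Fin (p n) → ℝ) |
              ε < |(∑ i, (1 / Real.sqrt n) • ω.2 i) ⬝ᵥ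
                ((∑ i, vecMulVec (ω.2 i) (ω.2 i))⁻¹ *ᵥ (∑ i, ω.1 i • ω.2 i))|})
        atTop (nhds (0 : ENNReal)) := by
  intro ε hε
  set M : ℝ := ∫ x, x ^ 2 ∂(gaussianReal 0 1) with hM
  have hε2 : ENNReal.ofReal (ε ^ 2) ≠ 0 := by
    simp only [ne_eq, ENNReal.ofReal_eq_zero, not_le]
    positivity
  have h1 : Tendsto (fun n : ℕ => M / (n : ℝ)) atTop (nhds 0) :=
    Tendsto.div_atTop tendsto_const_nhds tendsto_natCast_atTop_atTop
  have h2 : Tendsto (fun n : ℕ => ENNReal.ofReal (M / n)) atTop (nhds 0) := by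
    have := ENNReal.tendsto_ofReal h1
    simpa using this
  have hBtend : Tendsto (fun n : ℕ => ENNReal.ofReal (M / n) / ENNReal.ofReal (ε ^ 2))
      atTop (nhds 0) := by
    simp_rw [div_eq_mul_inv]
    have := ENNReal.Tendsto.mul_const h2
      (b := (ENNReal.ofReal (ε ^ 2))⁻¹) (Or.inr (by simpa using hε2))
    simpa [div_eq_mul_inv] using this
  refine tendsto_of_tendsto_of_tendsto_of_le_of_le' tendsto_const_nhds hBtend
    (Eventually.of_forall fun n => zero_le) ?_
  filter_upwards [eventually_ge_atTop 1] with n hn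
  exact per_n_bound n (p n) hn ε hε
end

section
/- Let x ∈ ℝ^p have i.i.d. N(0, 1/n) entries, β ∈ ℝ^p a fixed vector, and A | x ~ Bernoulli(σ(xᵀβ)). Then the random matrix xxᵀ has the same distribution as the conditional distribution of xxᵀ given A = a, for each a ∈ {0,1}. -/
open MeasureTheory ProbabilityTheory Matrix

/-- The logistic sigmoid function. -/
noncomputable def sig (t : ℝ) : ℝ := 1 / (1 + Real.exp (-t))

lemma sig_nonneg (t : ℝ) : 0 ≤ sig t := by
  unfold sig; positivity

lemma sig_add_sig_neg (t : ℝ) : sig t + sig (-t) = 1 := by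
  unfold sig
  have h1 : (0 : ℝ) < 1 + Real.exp (-t) := by positivity
  have h2 : (0 : ℝ) < 1 + Real.exp (-(-t)) := by positivity
  have h : Real.exp (-t) * Real.exp (-(-t)) = 1 := by
    rw [← Real.exp_add]; simp
  simp only [neg_neg] at h h2 ⊢
  field_simp
  nlinarith [h]

lemma sig_le_one (t : ℝ) : sig t ≤ 1 := by
  have := sig_add_sig_neg t
  have := sig_nonneg (-t)
  linarith

lemma gaussianReal_map_neg (v : NNReal) :
    (gaussianReal 0 v).map (fun x : ℝ => -x) = gaussianReal 0 v := by
  have h := gaussianReal_map_const_mul (μ := 0) (v := v) (-1)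
  simp only [mul_zero, neg_mul, one_mul] at h
  rw [h]
  have : (⟨(-1 : ℝ)^2, sq_nonneg _⟩ : NNReal) = 1 := by
    ext; norm_num
  congr 1; ext; simp

lemma pi_gaussian_map_neg (p : ℕ) (v : NNReal) :
    (Measure.pi fun _ : Fin p => gaussianReal 0 v).map (fun x : Fin p → ℝ => -x)
      = Measure.pi fun _ : Fin p => gaussianReal 0 v := by
  have hmeas : Measurable (fun x : Fin p → ℝ => -x) := by fun_prop
  refine (Measure.pi_eq fun s hs => ?_).symm
  rw [Measure.map_apply hmeas (MeasurableSet.univ_pi hs)]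
  have hpre : (fun x : Fin p → ℝ => -x) ⁻¹' Set.pi Set.univ s
      = Set.pi Set.univ (fun i => (fun y : ℝ => -y) ⁻¹' s i) := by
    ext x; simp [Set.mem_pi]
  rw [hpre, Measure.pi_pi]
  refine Finset.prod_congr rfl fun i _ => ?_
  rw [← Measure.map_apply (by fun_prop) (hs i), _root_.gaussianReal_map_neg]

/-- For `x` with i.i.d. `N(0,1/n)` entries and `A | x ~ Bernoulli(σ(xᵀβ))`, the matrix
`x xᵀ` (viewed as the function `(i,j) ↦ xᵢ xⱼ`) is distributed as `(x xᵀ | A = a)` for each `a ∈ {0,1}`: the conditional law of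
`x xᵀ` given `A = a` (i.e. the `σ(xᵀβ)`- resp. `(1-σ(xᵀβ))`-weighted law, normalized by
its total mass) coincides with the unconditional law of `x xᵀ`. -/
theorem gram_independent_of_treatment (n p : ℕ) (hn : 0 < n) (β : Fin p → ℝ) :
    ∀ a : Bool,
      Measure.map (fun (x : Fin p → ℝ) (i j : Fin p) => x i * x j)
        ((Measure.pi fun _ : Fin p => gaussianReal 0 (n : NNReal)⁻¹).withDensity
          (fun x => ENNReal.ofReal
            (if a then sig (∑ i, x i * β i) else 1 - sig (∑ i, x i * β i))))
      = ((Measure.pi fun _ : Fin p => gaussianReal 0 (n : NNReal)⁻¹).withDensity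
          (fun x => ENNReal.ofReal
            (if a then sig (∑ i, x i * β i) else 1 - sig (∑ i, x i * β i)))) Set.univ
        • Measure.map (fun (x : Fin p → ℝ) (i j : Fin p) => x i * x j)
            (Measure.pi fun _ : Fin p => gaussianReal 0 (n : NNReal)⁻¹) := by
  intro a
  set μ := Measure.pi fun _ : Fin p => gaussianReal 0 (n : NNReal)⁻¹ with hμ
  set w : (Fin p → ℝ) → ENNReal := fun x => ENNReal.ofReal
      (if a then sig (∑ i, x i * β i) else 1 - sig (∑ i, x i * β i)) with hw
  set f := fun (x : Fin p → ℝ) (i j : Fin p) => x i * x j with hf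
  have hμprob : IsProbabilityMeasure μ := by rw [hμ]; infer_instance
  have hsum_meas : Measurable fun x : Fin p → ℝ => ∑ i, x i * β i := by fun_prop
  have hsig_meas : Measurable sig := by
    unfold sig; fun_prop (disch := intro x; positivity)
  have hw_meas : Measurable w := by
    rw [hw]
    cases a <;> simp only [if_true, if_false, Bool.false_eq_true] <;>
      exact ENNReal.measurable_ofReal.comp (by fun_prop)
  have hf_meas : Measurable f := by rw [hf]; fun_prop
  have hneg_meas : Measurable (fun x : Fin p → ℝ => -x) := by fun_prop
  have hμneg : μ.map (fun x : Fin p → ℝ => -x) = μ := pi_gaussian_map_neg p _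
  -- key pointwise identity
  have hw_sum : ∀ x, w x + w (-x) = 1 := by
    intro x
    have hs : ∑ i, (-x) i * β i = -∑ i, x i * β i := by
      rw [← Finset.sum_neg_distrib]
      exact Finset.sum_congr rfl fun i _ => by simp [neg_mul]
    rw [hw]
    cases a
    · simp only [Bool.false_eq_true, if_false, hs]
      have h1 : (0:ℝ) ≤ 1 - sig (∑ i, x i * β i) := by linarith [sig_le_one (∑ i, x i * β i)]
      rw [← ENNReal.ofReal_add h1 (by linarith [sig_le_one (-∑ i, x i * β i)])]
      rw [show (1:ENNReal) = ENNReal.ofReal 1 by simp]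
      congr 1
      have := sig_add_sig_neg (∑ i, x i * β i)
      linarith
    · simp only [if_true, hs]
      rw [← ENNReal.ofReal_add (sig_nonneg _) (sig_nonneg _)]
      rw [show (1:ENNReal) = ENNReal.ofReal 1 by simp]
      congr 1
      exact sig_add_sig_neg _
  -- key: on neg-invariant sets, the weighted measure is half of μ
  have key : ∀ T : Set (Fin p → ℝ), MeasurableSet T →
      (fun x : Fin p → ℝ => -x) ⁻¹' T = T → (μ.withDensity w) T = μ T / 2 := by
    intro T hT hTinv
    have h1 : (μ.withDensity w) T = ∫⁻ x in T, w x ∂μ := withDensity_apply w hT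
    have h2 : ∫⁻ x in T, w (-x) ∂μ = ∫⁻ x in T, w x ∂μ := by
      conv_rhs => rw [← hμneg]
      rw [setLIntegral_map hT hw_meas hneg_meas, hTinv]
    have h3 : ∫⁻ x in T, w x ∂μ + ∫⁻ x in T, w x ∂μ = μ T := by
      nth_rewrite 1 [← h2]
      rw [← lintegral_add_left (by fun_prop)]
      rw [show (fun x : Fin p → ℝ => w (-x) + w x) = fun _ => (1:ENNReal) from
        funext fun x => by rw [add_comm]; exact hw_sum x]
      rw [setLIntegral_one]
    rw [h1]
    have h4 : 2 * ∫⁻ x in T, w x ∂μ = μ T := by rw [two_mul, h3]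
    rw [← h4, mul_comm, mul_div_assoc, ENNReal.div_self (by norm_num) (by norm_num), mul_one]
  have huniv : (μ.withDensity w) Set.univ = 1 / 2 := by
    rw [key Set.univ MeasurableSet.univ (by simp), measure_univ]
  have hf_neg : ∀ x, f (-x) = f x := by
    intro x; funext i j
    show (-x) i * (-x) j = x i * x j
    simp only [Pi.neg_apply]; ring
  ext S hS
  have hfS : MeasurableSet (f ⁻¹' S) := hf_meas hS
  have hinv : (fun x : Fin p → ℝ => -x) ⁻¹' (f ⁻¹' S) = f ⁻¹' S := by
    ext x; simp only [Set.mem_preimage, hf_neg x]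
  rw [Measure.map_apply hf_meas hS, key _ hfS hinv, Measure.smul_apply,
    Measure.map_apply hf_meas hS, huniv, smul_eq_mul, one_div,
    ENNReal.div_eq_inv_mul]
end

section
/- Suppose p/n → κ > 0. Let x ~ N(0, (1/n)I_p) and let β(n), ξ(n) ∈ ℝ^p be deterministic sequences with ‖β‖²/n → γ² and ‖ξ‖²/n → γ̂². Then the family of random variables { (1+e^{-xᵀξ})² / (1+e^{-xᵀβ}) }_{n∈ℕ} is uniformly integrable. -/
open MeasureTheory ProbabilityTheory Filter Real

section Aux

lemma UI_pdf_mul_exp (t : ℝ) {v : NNReal} (hv : v ≠ 0) (x : ℝ) :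
    gaussianPDFReal 0 v x * rexp (t * x)
      = rexp (t ^ 2 * v / 2) * gaussianPDFReal (t * v) v x := by
  have hv' : (0:ℝ) < (v:ℝ) := NNReal.coe_pos.mpr (pos_iff_ne_zero.mpr hv)
  unfold gaussianPDFReal
  have h : -(x - 0) ^ 2 / (2 * (v:ℝ)) + t * x
      = t ^ 2 * (v:ℝ) / 2 + -(x - t * (v:ℝ)) ^ 2 / (2 * (v:ℝ)) := by
    field_simp
    ring
  rw [mul_assoc, ← Real.exp_add, h, Real.exp_add]
  ring

lemma UI_integral_exp_gaussianReal (t : ℝ) (v : NNReal) :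
    ∫ x, rexp (t * x) ∂(gaussianReal 0 v) = rexp (t ^ 2 * v / 2) := by
  by_cases hv : v = 0
  · subst hv
    simp
  · have heq : ∀ x : ℝ, (gaussianPDFReal 0 v x).toNNReal • rexp (t * x)
        = rexp (t ^ 2 * v / 2) * gaussianPDFReal (t * v) v x := by
      intro x
      rw [NNReal.smul_def, smul_eq_mul, Real.coe_toNNReal _ (gaussianPDFReal_nonneg 0 v x)]
      exact UI_pdf_mul_exp t hv x
    rw [gaussianReal_of_var_ne_zero _ hv]
    calc ∫ x, rexp (t * x) ∂(volume.withDensity (gaussianPDF 0 v))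
        = ∫ x, (gaussianPDFReal 0 v x).toNNReal • rexp (t * x) :=
          integral_withDensity_eq_integral_smul
            ((measurable_gaussianPDFReal 0 v).real_toNNReal) _
      _ = ∫ x, rexp (t ^ 2 * v / 2) * gaussianPDFReal (t * v) v x := by simp_rw [heq]
      _ = rexp (t ^ 2 * v / 2) := by
          rw [integral_const_mul, integral_gaussianPDFReal_eq_one (t * v) hv, mul_one]

lemma UI_integrable_exp_gaussianReal (t : ℝ) (v : NNReal) :
    Integrable (fun x => rexp (t * x)) (gaussianReal 0 v) := by
  by_cases hv : v = 0
  · subst hv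
    rw [gaussianReal_zero_var]
    exact (integrable_const (rexp (t * 0))).congr (ae_eq_dirac fun x => rexp (t * x)).symm
  · have heq : (fun x : ℝ => (gaussianPDFReal 0 v x).toNNReal • rexp (t * x))
        = fun x => rexp (t ^ 2 * v / 2) * gaussianPDFReal (t * v) v x := by
      funext x
      rw [NNReal.smul_def, smul_eq_mul, Real.coe_toNNReal _ (gaussianPDFReal_nonneg 0 v x)]
      exact UI_pdf_mul_exp t hv x
    rw [gaussianReal_of_var_ne_zero _ hv]
    have h3 : Integrable (fun x : ℝ => (gaussianPDFReal 0 v x).toNNReal • rexp (t * x))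
        volume := by
      rw [heq]
      exact (integrable_gaussianPDFReal (t * v) v).const_mul _
    exact (integrable_withDensity_iff_integrable_smul
        (μ := volume) (g := fun x => rexp (t * x))
        ((measurable_gaussianPDFReal 0 v).real_toNNReal)).mpr h3

lemma UI_exp_prod (t : ℝ) {m : ℕ} (a : Fin m → ℝ) (x : Fin m → ℝ) :
    rexp (t * ∑ i, x i * a i) = ∏ i, rexp (t * a i * x i) := by
  rw [← Real.exp_sum]
  congr 1
  rw [Finset.mul_sum]
  exact Finset.sum_congr rfl fun i _ => by ring

lemma UI_integral_exp_pi {m : ℕ} (v : NNReal) (a : Fin m → ℝ) (t : ℝ) :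
    ∫ x : Fin m → ℝ, rexp (t * ∑ i, x i * a i)
        ∂(Measure.pi fun _ : Fin m => gaussianReal 0 v)
      = rexp (t ^ 2 * ((v : ℝ) * ∑ i, a i ^ 2) / 2) := by
  simp_rw [UI_exp_prod t a]
  have key := MeasureTheory.integral_fintype_prod_eq_prod (𝕜 := ℝ) (ι := Fin m) (E := fun _ => ℝ)
      (fun i (y : ℝ) => rexp (t * a i * y)) (μ := fun _ => gaussianReal 0 v)
  calc ∫ x : Fin m → ℝ, ∏ i, rexp (t * a i * x i)
          ∂(Measure.pi fun _ : Fin m => gaussianReal 0 v)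
      = ∏ i, ∫ y, rexp (t * a i * y) ∂(gaussianReal 0 v) := key
    _ = ∏ i : Fin m, rexp ((t * a i) ^ 2 * (v : ℝ) / 2) := by
        exact Finset.prod_congr rfl fun i _ => UI_integral_exp_gaussianReal (t * a i) v
    _ = rexp (t ^ 2 * ((v : ℝ) * ∑ i, a i ^ 2) / 2) := by
        rw [← Real.exp_sum]
        congr 1
        have h2 : ∀ i : Fin m, (t * a i) ^ 2 * (v:ℝ) / 2 = (t ^ 2 * (v:ℝ) / 2) * a i ^ 2 :=
          fun i => by ring
        simp_rw [h2]
        rw [← Finset.mul_sum]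
        ring

lemma UI_integrable_exp_pi {m : ℕ} (v : NNReal) (a : Fin m → ℝ) (t : ℝ) :
    Integrable (fun x : Fin m → ℝ => rexp (t * ∑ i, x i * a i))
      (Measure.pi fun _ : Fin m => gaussianReal 0 v) := by
  have key := MeasureTheory.Integrable.fintype_prod (𝕜 := ℝ) (ι := Fin m) (E := ℝ)
      (f := fun i (y : ℝ) => rexp (t * a i * y)) (μ := fun _ => gaussianReal 0 v)
      (fun i => UI_integrable_exp_gaussianReal (t * a i) v)
  exact key.congr (Filter.Eventually.of_forall fun x => (UI_exp_prod t a x).symm)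

lemma UI_one_add_exp_pow_le (s : ℝ) (k : ℕ) :
    (1 + rexp s) ^ k ≤ 2 ^ k * (rexp (k * s) + rexp (-(k * s))) := by
  have h0 : (1:ℝ) ≤ rexp |s| := by
    rw [← Real.exp_zero]
    exact Real.exp_le_exp.mpr (abs_nonneg s)
  have h1 : 1 + rexp s ≤ 2 * rexp |s| := by
    have := Real.exp_le_exp.mpr (le_abs_self s)
    linarith
  have h2 : (1 + rexp s) ^ k ≤ (2 * rexp |s|) ^ k :=
    pow_le_pow_left₀ (by positivity) h1 k
  have h3 : (2 * rexp |s|) ^ k = 2 ^ k * rexp ((k : ℝ) * |s|) := by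
    rw [mul_pow, Real.exp_nat_mul]
  have h4 : rexp ((k : ℝ) * |s|) ≤ rexp ((k : ℝ) * s) + rexp (-((k : ℝ) * s)) := by
    rcases abs_cases s with ⟨h, _⟩ | ⟨h, _⟩
    · rw [h]
      nlinarith [Real.exp_pos (-((k : ℝ) * s))]
    · rw [h, mul_neg]
      nlinarith [Real.exp_pos ((k : ℝ) * s)]
  calc (1 + rexp s) ^ k ≤ (2 * rexp |s|) ^ k := h2
    _ = 2 ^ k * rexp ((k : ℝ) * |s|) := h3
    _ ≤ 2 ^ k * (rexp ((k : ℝ) * s) + rexp (-((k : ℝ) * s))) := by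
        exact mul_le_mul_of_nonneg_left h4 (by positivity)


lemma div_le_div_of_nonneg_right' {a b c : ℝ} (h : a ≤ b) (hc : 0 < c) : a / c ≤ b / c :=
  div_le_div_of_nonneg_right h hc.le

end Aux

/-- With `p/n → κ > 0`, `x ~ N(0, (1/n) I_p)`, and deterministic sequences `β(n), ξ(n)`
with `‖β‖²/n → γ²` and `‖ξ‖²/n → γ̂²`, the family
`(1 + e^{-xᵀξ})² / (1 + e^{-xᵀβ})` is uniformly integrable. -/
theorem uniform_integrability_sigmoid_ratio (p : ℕ → ℕ) (κ : ℝ) (hκ : 0 < κ)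
    (hp : Tendsto (fun n => (p n : ℝ) / n) atTop (nhds κ))
    (β ξ : (n : ℕ) → Fin (p n) → ℝ) (γ γh : ℝ)
    (hβ : Tendsto (fun n => (∑ i, (β n i) ^ 2) / n) atTop (nhds (γ ^ 2)))
    (hξ : Tendsto (fun n => (∑ i, (ξ n i) ^ 2) / n) atTop (nhds (γh ^ 2))) :
    ∀ ε > (0 : ℝ), ∃ C : ℝ, ∀ n : ℕ,
      ∫ x in {x : Fin (p n) → ℝ |
            C ≤ (1 + Real.exp (-(∑ i, x i * ξ n i))) ^ 2
                / (1 + Real.exp (-(∑ i, x i * β n i)))},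
          (1 + Real.exp (-(∑ i, x i * ξ n i))) ^ 2 / (1 + Real.exp (-(∑ i, x i * β n i)))
          ∂(Measure.pi fun _ : Fin (p n) => gaussianReal 0 (n : NNReal)⁻¹) ≤ ε := by
  -- a uniform bound on the variances
  obtain ⟨M, hM⟩ := hξ.bddAbove_range
  have hMn : ∀ n : ℕ, (∑ i, (ξ n i) ^ 2) / (n : ℝ) ≤ M := fun n => hM ⟨n, rfl⟩
  have hM0 : 0 ≤ M := le_trans (by positivity) (hMn 0)
  set B : ℝ := 32 * rexp (8 * M) with hBdef
  have hB : 0 < B := by positivity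
  intro ε hε
  refine ⟨max 1 (B / ε), fun n => ?_⟩
  set C : ℝ := max 1 (B / ε) with hCdef
  have hC1 : (1:ℝ) ≤ C := le_max_left _ _
  have hC0 : (0:ℝ) < C := lt_of_lt_of_le one_pos hC1
  set μ := Measure.pi fun _ : Fin (p n) => gaussianReal 0 (n : NNReal)⁻¹ with hμdef
  set F : (Fin (p n) → ℝ) → ℝ := fun x =>
    (1 + Real.exp (-(∑ i, x i * ξ n i))) ^ 2 / (1 + Real.exp (-(∑ i, x i * β n i))) with hFdef
  set G : (Fin (p n) → ℝ) → ℝ := fun x =>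
    16 * (rexp ((4:ℝ) * ∑ i, x i * ξ n i) + rexp ((-4:ℝ) * ∑ i, x i * ξ n i)) / C with hGdef
  -- variance bound
  have hσ : (((n : NNReal)⁻¹ : NNReal) : ℝ) * ∑ i, (ξ n i) ^ 2
      = (∑ i, (ξ n i) ^ 2) / (n : ℝ) := by
    push_cast
    rw [inv_mul_eq_div]
  -- measurability
  have hu : Measurable fun x : Fin (p n) → ℝ => ∑ i, x i * ξ n i :=
    Finset.measurable_sum _ fun i _ => (measurable_pi_apply i).mul_const _
  have hw : Measurable fun x : Fin (p n) → ℝ => ∑ i, x i * β n i :=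
    Finset.measurable_sum _ fun i _ => (measurable_pi_apply i).mul_const _
  have hFmeas : Measurable F := by
    apply Measurable.div
    · exact (measurable_const.add (Real.measurable_exp.comp hu.neg)).pow_const 2
    · exact measurable_const.add (Real.measurable_exp.comp hw.neg)
  have hSmeas : MeasurableSet {x : Fin (p n) → ℝ | C ≤ F x} :=
    measurableSet_le measurable_const hFmeas
  -- nonnegativity and basic pointwise bounds
  have hden : ∀ x : Fin (p n) → ℝ, (1:ℝ) ≤ 1 + Real.exp (-(∑ i, x i * β n i)) := fun x =>
    le_add_of_nonneg_right (Real.exp_pos _).le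
  have hFnonneg : ∀ x, 0 ≤ F x := fun x => div_nonneg (sq_nonneg _) (by positivity)
  have hGnonneg : ∀ x, 0 ≤ G x := fun x => by
    apply div_nonneg _ hC0.le
    positivity
  -- G is integrable with a uniformly bounded integral
  have hint4 : Integrable (fun x : Fin (p n) → ℝ => rexp ((4:ℝ) * ∑ i, x i * ξ n i)) μ :=
    UI_integrable_exp_pi _ (ξ n) 4
  have hintm4 : Integrable (fun x : Fin (p n) → ℝ => rexp ((-4:ℝ) * ∑ i, x i * ξ n i)) μ :=
    UI_integrable_exp_pi _ (ξ n) (-4)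
  have hGint : Integrable G μ := (((hint4.add hintm4).const_mul 16).div_const C)
  have hGI : ∫ x, G x ∂μ ≤ B / C := by
    have h1 : ∫ x, G x ∂μ
        = 16 * ((∫ x, rexp ((4:ℝ) * ∑ i, x i * ξ n i) ∂μ)
            + ∫ x, rexp ((-4:ℝ) * ∑ i, x i * ξ n i) ∂μ) / C := by
      rw [hGdef]
      simp only
      rw [integral_div, integral_const_mul, integral_add hint4 hintm4]
    rw [h1, UI_integral_exp_pi _ (ξ n) 4, UI_integral_exp_pi _ (ξ n) (-4)]
    have hexple : rexp ((4:ℝ) ^ 2 * ((((n : NNReal)⁻¹ : NNReal) : ℝ) * ∑ i, (ξ n i) ^ 2) / 2)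
        ≤ rexp (8 * M) := by
      apply Real.exp_le_exp.mpr
      rw [hσ]
      nlinarith [hMn n]
    have hexple' : rexp ((-4:ℝ) ^ 2 * ((((n : NNReal)⁻¹ : NNReal) : ℝ) * ∑ i, (ξ n i) ^ 2) / 2)
        ≤ rexp (8 * M) := by
      apply Real.exp_le_exp.mpr
      rw [hσ]
      nlinarith [hMn n]
    have hsum : 16 * (rexp ((4:ℝ) ^ 2 * ((((n : NNReal)⁻¹ : NNReal) : ℝ) * ∑ i, (ξ n i) ^ 2) / 2)
          + rexp ((-4:ℝ) ^ 2 * ((((n : NNReal)⁻¹ : NNReal) : ℝ) * ∑ i, (ξ n i) ^ 2) / 2))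
        ≤ B := by
      rw [hBdef]
      linarith
    exact div_le_div_of_nonneg_right' hsum hC0
  -- pointwise bound on the bad set
  have hpt : ∀ x ∈ {x : Fin (p n) → ℝ | C ≤ F x}, F x ≤ G x := by
    intro x hx
    have hxC : C ≤ F x := hx
    have hF1 : F x ≤ F x ^ 2 / C := by
      rw [le_div_iff₀ hC0, sq]
      exact mul_le_mul_of_nonneg_left hxC (le_trans hC0.le hxC)
    have hF2 : F x ^ 2 ≤ (1 + rexp (-(∑ i, x i * ξ n i))) ^ 4 := by
      have hD1 : (1:ℝ) ≤ (1 + Real.exp (-(∑ i, x i * β n i))) ^ 2 := by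
        nlinarith [hden x]
      have : F x ^ 2 = ((1 + rexp (-(∑ i, x i * ξ n i))) ^ 2) ^ 2
          / (1 + Real.exp (-(∑ i, x i * β n i))) ^ 2 := by
        rw [hFdef]; simp only; rw [div_pow]
      rw [this, ← pow_mul]
      exact div_le_self (by positivity) hD1
    have hF3 : (1 + rexp (-(∑ i, x i * ξ n i))) ^ 4
        ≤ 16 * (rexp ((4:ℝ) * ∑ i, x i * ξ n i) + rexp ((-4:ℝ) * ∑ i, x i * ξ n i)) := by
      have h := UI_one_add_exp_pow_le (-(∑ i, x i * ξ n i)) 4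
      have e1 : ((4:ℕ) : ℝ) * -(∑ i, x i * ξ n i) = (-4:ℝ) * ∑ i, x i * ξ n i := by
        push_cast; ring
      rw [e1] at h
      rw [show -((-4:ℝ) * ∑ i, x i * ξ n i) = (4:ℝ) * ∑ i, x i * ξ n i from by ring] at h
      calc (1 + rexp (-(∑ i, x i * ξ n i))) ^ 4
          ≤ 2 ^ 4 * (rexp ((-4:ℝ) * ∑ i, x i * ξ n i) + rexp ((4:ℝ) * ∑ i, x i * ξ n i)) := h
        _ = 16 * (rexp ((4:ℝ) * ∑ i, x i * ξ n i) + rexp ((-4:ℝ) * ∑ i, x i * ξ n i)) := by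
            ring
    calc F x ≤ F x ^ 2 / C := hF1
      _ ≤ (1 + rexp (-(∑ i, x i * ξ n i))) ^ 4 / C :=
          div_le_div_of_nonneg_right' hF2 hC0
      _ ≤ G x := div_le_div_of_nonneg_right' hF3 hC0
  -- F is integrable on the bad set
  have hFS : IntegrableOn F {x : Fin (p n) → ℝ | C ≤ F x} μ := by
    refine Integrable.mono' hGint.integrableOn hFmeas.aestronglyMeasurable.restrict ?_
    rw [ae_restrict_iff' hSmeas]
    exact Filter.Eventually.of_forall fun x hx => by
      rw [Real.norm_eq_abs, abs_of_nonneg (hFnonneg x)]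
      exact hpt x hx
  calc ∫ x in {x : Fin (p n) → ℝ | C ≤ F x}, F x ∂μ
      ≤ ∫ x in {x : Fin (p n) → ℝ | C ≤ F x}, G x ∂μ :=
        setIntegral_mono_on hFS hGint.integrableOn hSmeas hpt
    _ ≤ ∫ x, G x ∂μ :=
        setIntegral_le_integral hGint (Filter.Eventually.of_forall hGnonneg)
    _ ≤ B / C := hGI
    _ ≤ ε := by
        rw [div_le_iff₀ hC0]
        have : B / ε ≤ C := le_max_right _ _
        calc B = ε * (B / ε) := by field_simp
          _ ≤ ε * C := by exact mul_le_mul_of_nonneg_left this hε.le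
end
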